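/- (Butterfly condition implies convexity of call prices in strike.) Let τ > 0, F > 0 and let v : ℝ → (0,∞) be twice differentiable with But(τ, k, v(k), v'(k), v''(k)) ≥ 0 for all k ∈ ℝ. Then the function K ↦ F · BS(τ, log(K/F), v(log(K/F))) is convex on (0,∞). -/

import Mathlib

open Real Filter Set MeasureTheory

/-- Standard normal probability density function. -/
noncomputable def stdGaussPDF (x : ℝ) : ℝ :=
  (Real.sqrt (2 * Real.pi))⁻¹ * Real.exp (-(x ^ 2) / 2)

/-- Standard normal cumulative distribution function. -/
noncomputable def stdGaussCDF (x : ℝ) : ℝ :=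
  ∫ t in Set.Iic x, stdGaussPDF t

/-- d1 term of the Black–Scholes formula. -/
noncomputable def d1 (τ k v : ℝ) : ℝ :=
  -k / (v * Real.sqrt τ) + v * Real.sqrt τ / 2

/-- d2 term of the Black–Scholes formula. -/
noncomputable def d2 (τ k v : ℝ) : ℝ :=
  -k / (v * Real.sqrt τ) - v * Real.sqrt τ / 2

/-- Black–Scholes call price in units of the forward. -/
noncomputable def BS (τ k v : ℝ) : ℝ :=
  stdGaussCDF (d1 τ k v) - Real.exp k * stdGaussCDF (d2 τ k v)

/-- The butterfly functional. -/
noncomputable def But (τ k v₀ v₁ v₂ : ℝ) : ℝ :=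
  (1 + d1 τ k v₀ * v₁ * Real.sqrt τ) * (1 + d2 τ k v₀ * v₁ * Real.sqrt τ) + v₀ * v₂ * τ

lemma pdf_cont : Continuous stdGaussPDF := by
  unfold stdGaussPDF
  exact continuous_const.mul (Real.continuous_exp.comp (by continuity))

lemma pdf_pos (x : ℝ) : 0 < stdGaussPDF x := by
  unfold stdGaussPDF
  have h : 0 < Real.sqrt (2 * Real.pi) := Real.sqrt_pos.mpr (by positivity)
  positivity

lemma pdf_integrable : Integrable stdGaussPDF := by
  have h : Integrable (fun x : ℝ => Real.exp (-(1/2 : ℝ) * x ^ 2)) :=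
    integrable_exp_neg_mul_sq (by norm_num)
  have h2 := h.const_mul (Real.sqrt (2 * Real.pi))⁻¹
  have heq : stdGaussPDF = fun x : ℝ =>
      (Real.sqrt (2 * Real.pi))⁻¹ * Real.exp (-(1/2 : ℝ) * x ^ 2) := by
    funext x; unfold stdGaussPDF; ring_nf
  rw [heq]; exact h2

lemma cdf_hasDeriv (x : ℝ) : HasDerivAt stdGaussCDF (stdGaussPDF x) x := by
  have key : ∀ y : ℝ, stdGaussCDF y = stdGaussCDF 0 + ∫ t in (0:ℝ)..y, stdGaussPDF t := by
    intro y
    have := intervalIntegral.integral_Iic_sub_Iic (μ := volume)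
      (pdf_integrable.integrableOn (s := Iic (0:ℝ)))
      (pdf_integrable.integrableOn (s := Iic y))
    unfold stdGaussCDF
    linarith
  have h1 : HasDerivAt (fun y : ℝ => stdGaussCDF 0 + ∫ t in (0:ℝ)..y, stdGaussPDF t)
      (stdGaussPDF x) x := by
    refine HasDerivAt.const_add _ ?_
    exact intervalIntegral.integral_hasDerivAt_right
      pdf_integrable.intervalIntegrable
      (pdf_cont.stronglyMeasurableAtFilter _ _)
      pdf_cont.continuousAt
  have : stdGaussCDF = fun y : ℝ => stdGaussCDF 0 + ∫ t in (0:ℝ)..y, stdGaussPDF t :=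
    funext key
  rw [this]; exact h1

lemma pdf_hasDeriv (x : ℝ) : HasDerivAt stdGaussPDF (-x * stdGaussPDF x) x := by
  have hg : HasDerivAt (fun x : ℝ => -(x ^ 2) / 2) (-x) x := by
    have h := ((hasDerivAt_pow 2 x).neg).div_const 2
    refine h.congr_deriv ?_
    simp; ring
  have h := (hg.exp).const_mul (Real.sqrt (2 * Real.pi))⁻¹
  have hval : -x * stdGaussPDF x
      = (Real.sqrt (2 * Real.pi))⁻¹ * (Real.exp (-(x ^ 2) / 2) * -x) := by
    unfold stdGaussPDF; ring
  rw [hval]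
  exact h

lemma pdf_d1_eq (τ : ℝ) (hτ : 0 < τ) (k V : ℝ) (hV : 0 < V) :
    stdGaussPDF (d1 τ k V) = Real.exp k * stdGaussPDF (d2 τ k V) := by
  unfold stdGaussPDF d1 d2
  rw [mul_comm (Real.exp k), mul_assoc, ← Real.exp_add]
  congr 1
  have hs : Real.sqrt τ ≠ 0 := ne_of_gt (Real.sqrt_pos.mpr hτ)
  have hV' : V ≠ 0 := hV.ne'
  field_simp
  ring

lemma hasDerivAt_d1 (τ : ℝ) (hτ : 0 < τ) (v v' : ℝ → ℝ) (hv : ∀ k, 0 < v k)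
    (hv' : ∀ k, HasDerivAt v (v' k) k) (k : ℝ) :
    HasDerivAt (fun x => d1 τ x (v x))
      ((-1 * (v k * Real.sqrt τ) - -k * (v' k * Real.sqrt τ)) / (v k * Real.sqrt τ) ^ 2
        + v' k * Real.sqrt τ / 2) k := by
  have hs : Real.sqrt τ ≠ 0 := ne_of_gt (Real.sqrt_pos.mpr hτ)
  have hden : v k * Real.sqrt τ ≠ 0 := mul_ne_zero (hv k).ne' hs
  have h1 : HasDerivAt (fun x : ℝ => -x) (-1 : ℝ) k := (hasDerivAt_id k).neg
  have h2 : HasDerivAt (fun x => v x * Real.sqrt τ) (v' k * Real.sqrt τ) k :=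
    (hv' k).mul_const _
  have h3 := h1.div h2 hden
  have h4 : HasDerivAt (fun x => v x * Real.sqrt τ / 2) (v' k * Real.sqrt τ / 2) k :=
    h2.div_const 2
  have := h3.add h4
  exact this

lemma hasDerivAt_d2 (τ : ℝ) (hτ : 0 < τ) (v v' : ℝ → ℝ) (hv : ∀ k, 0 < v k)
    (hv' : ∀ k, HasDerivAt v (v' k) k) (k : ℝ) :
    HasDerivAt (fun x => d2 τ x (v x))
      ((-1 * (v k * Real.sqrt τ) - -k * (v' k * Real.sqrt τ)) / (v k * Real.sqrt τ) ^ 2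
        - v' k * Real.sqrt τ / 2) k := by
  have hs : Real.sqrt τ ≠ 0 := ne_of_gt (Real.sqrt_pos.mpr hτ)
  have hden : v k * Real.sqrt τ ≠ 0 := mul_ne_zero (hv k).ne' hs
  have h1 : HasDerivAt (fun x : ℝ => -x) (-1 : ℝ) k := (hasDerivAt_id k).neg
  have h2 : HasDerivAt (fun x => v x * Real.sqrt τ) (v' k * Real.sqrt τ) k :=
    (hv' k).mul_const _
  have h3 := h1.div h2 hden
  have h4 : HasDerivAt (fun x => v x * Real.sqrt τ / 2) (v' k * Real.sqrt τ / 2) k :=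
    h2.div_const 2
  have := h3.sub h4
  exact this

noncomputable def B1 (τ : ℝ) (v v' : ℝ → ℝ) (k : ℝ) : ℝ :=
  Real.exp k * stdGaussPDF (d2 τ k (v k)) * (v' k * Real.sqrt τ)
    - Real.exp k * stdGaussCDF (d2 τ k (v k))

lemma hasDerivAt_BS (τ : ℝ) (hτ : 0 < τ) (v v' : ℝ → ℝ) (hv : ∀ k, 0 < v k)
    (hv' : ∀ k, HasDerivAt v (v' k) k) (k : ℝ) :
    HasDerivAt (fun x => BS τ x (v x)) (B1 τ v v' k) k := by
  have hd1 := hasDerivAt_d1 τ hτ v v' hv hv' k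
  have hd2 := hasDerivAt_d2 τ hτ v v' hv hv' k
  have hΦ1 := (cdf_hasDeriv (d1 τ k (v k))).comp k hd1
  have hΦ2 := (cdf_hasDeriv (d2 τ k (v k))).comp k hd2
  have hE : HasDerivAt Real.exp (Real.exp k) k := Real.hasDerivAt_exp k
  have h := hΦ1.sub (hE.mul hΦ2)
  have h' : HasDerivAt (fun x => BS τ x (v x))
      (stdGaussPDF (d1 τ k (v k)) *
          ((-1 * (v k * Real.sqrt τ) - -k * (v' k * Real.sqrt τ)) / (v k * Real.sqrt τ) ^ 2
            + v' k * Real.sqrt τ / 2)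
        - (Real.exp k * stdGaussCDF (d2 τ k (v k))
          + Real.exp k * (stdGaussPDF (d2 τ k (v k)) *
            ((-1 * (v k * Real.sqrt τ) - -k * (v' k * Real.sqrt τ)) / (v k * Real.sqrt τ) ^ 2
              - v' k * Real.sqrt τ / 2)))) k := by
    exact h
  convert h' using 1
  rw [pdf_d1_eq τ hτ k (v k) (hv k)]
  unfold B1
  ring

lemma hasDerivAt_B1 (τ : ℝ) (hτ : 0 < τ) (v v' v'' : ℝ → ℝ) (hv : ∀ k, 0 < v k)
    (hv' : ∀ k, HasDerivAt v (v' k) k) (hv'' : ∀ k, HasDerivAt v' (v'' k) k) (k : ℝ) :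
    HasDerivAt (B1 τ v v')
      (B1 τ v v' k + Real.exp k * stdGaussPDF (d2 τ k (v k))
        * But τ k (v k) (v' k) (v'' k) / (v k * Real.sqrt τ)) k := by
  have hs : Real.sqrt τ ≠ 0 := ne_of_gt (Real.sqrt_pos.mpr hτ)
  have hV : v k ≠ 0 := (hv k).ne'
  have hd2 := hasDerivAt_d2 τ hτ v v' hv hv' k
  have hP := (pdf_hasDeriv (d2 τ k (v k))).comp k hd2
  have hΦ := (cdf_hasDeriv (d2 τ k (v k))).comp k hd2
  have hE : HasDerivAt Real.exp (Real.exp k) k := Real.hasDerivAt_exp k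
  have hvs : HasDerivAt (fun x => v' x * Real.sqrt τ) (v'' k * Real.sqrt τ) k :=
    (hv'' k).mul_const _
  have h := ((hE.mul hP).mul hvs).sub (hE.mul hΦ)
  have h' : HasDerivAt (B1 τ v v')
      ((Real.exp k * stdGaussPDF (d2 τ k (v k))
          + Real.exp k * (-(d2 τ k (v k)) * stdGaussPDF (d2 τ k (v k)) *
            ((-1 * (v k * Real.sqrt τ) - -k * (v' k * Real.sqrt τ)) / (v k * Real.sqrt τ) ^ 2
              - v' k * Real.sqrt τ / 2))) * (v' k * Real.sqrt τ)
        + Real.exp k * stdGaussPDF (d2 τ k (v k)) * (v'' k * Real.sqrt τ)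
        - (Real.exp k * stdGaussCDF (d2 τ k (v k))
          + Real.exp k * (stdGaussPDF (d2 τ k (v k)) *
            ((-1 * (v k * Real.sqrt τ) - -k * (v' k * Real.sqrt τ)) / (v k * Real.sqrt τ) ^ 2
              - v' k * Real.sqrt τ / 2)))) k := by
    exact h
  convert h' using 1
  unfold B1 But d1 d2
  have h2 : Real.sqrt τ * Real.sqrt τ = τ := Real.mul_self_sqrt hτ.le
  generalize hgen : Real.sqrt τ = s at *
  rw [← h2]
  have hs0 : s ≠ 0 := hs
  field_simp
  ring

theorem stmt11 (τ F : ℝ) (hτ : 0 < τ) (hF : 0 < F)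
    (v v' v'' : ℝ → ℝ) (hv : ∀ k, 0 < v k)
    (hv' : ∀ k, HasDerivAt v (v' k) k)
    (hv'' : ∀ k, HasDerivAt v' (v'' k) k)
    (hBut : ∀ k, 0 ≤ But τ k (v k) (v' k) (v'' k)) :
    ConvexOn ℝ (Set.Ioi (0 : ℝ))
      (fun K => F * BS τ (Real.log (K / F)) (v (Real.log (K / F)))) := by
  have hs0 : 0 < Real.sqrt τ := Real.sqrt_pos.mpr hτ
  set g1 : ℝ → ℝ := fun K => F * B1 τ v v' (Real.log (K / F)) * K⁻¹ with hg1def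
  set g2 : ℝ → ℝ := fun K =>
    F * (Real.exp (Real.log (K / F)) * stdGaussPDF (d2 τ (Real.log (K / F)) (v (Real.log (K / F))))
      * But τ (Real.log (K / F)) (v (Real.log (K / F))) (v' (Real.log (K / F))) (v'' (Real.log (K / F)))
      / (v (Real.log (K / F)) * Real.sqrt τ)) / K ^ 2 with hg2def
  have hlog : ∀ K : ℝ, K ∈ Ioi (0:ℝ) → HasDerivAt (fun K => Real.log (K / F)) (1 / K) K := by
    intro K hK
    have hK0 : (0:ℝ) < K := hK
    have h1 : HasDerivAt (fun K : ℝ => K / F) (1 / F) K := by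
      simpa using (hasDerivAt_id K).div_const F
    have h2 := (Real.hasDerivAt_log (div_ne_zero hK0.ne' hF.ne')).comp K h1
    refine h2.congr_deriv ?_
    field_simp
  have hf' : ∀ K ∈ Ioi (0:ℝ), HasDerivAt
      (fun K => F * BS τ (Real.log (K / F)) (v (Real.log (K / F)))) (g1 K) K := by
    intro K hK
    have hK0 : (0:ℝ) < K := hK
    have h := ((hasDerivAt_BS τ hτ v v' hv hv' (Real.log (K / F))).comp K
      (hlog K hK)).const_mul F
    have h2 : HasDerivAt (fun K => F * BS τ (Real.log (K / F)) (v (Real.log (K / F))))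
        (F * (B1 τ v v' (Real.log (K / F)) * (1 / K))) K := h
    convert h2 using 1
    simp [hg1def]
    ring
  have hg1' : ∀ K ∈ Ioi (0:ℝ), HasDerivAt g1 (g2 K) K := by
    intro K hK
    have hK0 : (0:ℝ) < K := hK
    have hA := ((hasDerivAt_B1 τ hτ v v' v'' hv hv' hv'' (Real.log (K / F))).comp K
      (hlog K hK)).const_mul F
    have hB : HasDerivAt (fun x : ℝ => x⁻¹) (-(K ^ 2)⁻¹) K := hasDerivAt_inv hK0.ne'
    have h := hA.mul hB
    have h2 : HasDerivAt g1
        (F * ((B1 τ v v' (Real.log (K / F)) + Real.exp (Real.log (K / F)) *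
            stdGaussPDF (d2 τ (Real.log (K / F)) (v (Real.log (K / F))))
            * But τ (Real.log (K / F)) (v (Real.log (K / F))) (v' (Real.log (K / F))) (v'' (Real.log (K / F)))
            / (v (Real.log (K / F)) * Real.sqrt τ)) * (1 / K)) * K⁻¹
          + F * B1 τ v v' (Real.log (K / F)) * -(K ^ 2)⁻¹) K := h
    convert h2 using 1
    simp only [hg2def, inv_eq_one_div]
    have hKne : K ≠ 0 := hK0.ne'
    have hvne : v (Real.log (K / F)) ≠ 0 := (hv _).ne'
    have hsne : Real.sqrt τ ≠ 0 := hs0.ne'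
    field_simp
    ring
  have hg2nonneg : ∀ K ∈ Ioi (0:ℝ), 0 ≤ g2 K := by
    intro K hK
    have hK0 : (0:ℝ) < K := hK
    simp only [hg2def]
    have h1 := (pdf_pos (d2 τ (Real.log (K / F)) (v (Real.log (K / F))))).le
    have h2 := hBut (Real.log (K / F))
    have h3 := (hv (Real.log (K / F))).le
    positivity
  have hint : interior (Ioi (0:ℝ)) = Ioi 0 := interior_Ioi
  apply convexOn_of_deriv2_nonneg (convex_Ioi 0)
  · exact fun K hK => (hf' K hK).continuousAt.continuousWithinAt
  · rw [hint]
    exact fun K hK => (hf' K hK).differentiableAt.differentiableWithinAt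
  · rw [hint]
    intro K hK
    have hev : deriv (fun K => F * BS τ (Real.log (K / F)) (v (Real.log (K / F)))) =ᶠ[nhds K] g1 :=
      Filter.eventually_of_mem (isOpen_Ioi.mem_nhds hK) fun y hy => (hf' y hy).deriv
    exact (((hg1' K hK).congr_of_eventuallyEq hev).differentiableAt).differentiableWithinAt
  · rw [hint]
    intro K hK
    have hev : deriv (fun K => F * BS τ (Real.log (K / F)) (v (Real.log (K / F)))) =ᶠ[nhds K] g1 :=
      Filter.eventually_of_mem (isOpen_Ioi.mem_nhds hK) fun y hy => (hf' y hy).deriv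
    have hdd : HasDerivAt (deriv (fun K => F * BS τ (Real.log (K / F)) (v (Real.log (K / F)))))
        (g2 K) K := (hg1' K hK).congr_of_eventuallyEq hev
    have : deriv^[2] (fun K => F * BS τ (Real.log (K / F)) (v (Real.log (K / F)))) K = g2 K := by
      simp only [Function.iterate_succ, Function.iterate_zero, Function.comp_apply, Function.id_def]
      exact hdd.deriv
    rw [this]
    exact hg2nonneg K hK
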